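/- Assume the measure-equivalence data above together with the amenability hypothesis on the pair (Γ, X). If Δ has the Haagerup property — i.e. there are positive definite functions u_n : Δ → ℂ with u_n(e) = 1, each vanishing at infinity (for every ε > 0 the set {d ∈ Δ : |u_n(d)| ≥ ε} is finite), and u_n(d) → 1 as n → ∞ for every d ∈ Δ — then Γ has the Haagerup property: there are positive definite functions v_n : Γ → ℂ with v_n(e) = 1, each vanishing at infinity, and v_n(γ) → 1 for every γ ∈ Γ. -/

import Mathlib

open MeasureTheory Filter Set
open scoped ComplexOrder

/-- A function `u : G → ℂ` on a group is positive definite. -/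
def IsPosDefFn {G : Type*} [Group G] (u : G → ℂ) : Prop :=
  ∀ (n : ℕ) (g : Fin n → G) (c : Fin n → ℂ),
    0 ≤ ∑ i, ∑ j, c i * (starRingEnd ℂ) (c j) * u ((g j)⁻¹ * g i)

lemma posdef_two {G : Type*} [Group G] {u : G → ℂ} (h : IsPosDefFn u) (h1 : u 1 = 1)
    (d : G) (z : ℂ) : 0 ≤ 1 + z * (starRingEnd ℂ) z + (starRingEnd ℂ) z * u d⁻¹ + z * u d := by
  have := h 2 ![1, d] ![1, z]
  simp [Fin.sum_univ_two, h1] at this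
  convert this using 1
  ring

lemma posdef_abs_le_one {G : Type*} [Group G] {u : G → ℂ} (h : IsPosDefFn u) (h1 : u 1 = 1)
    (d : G) : ‖u d‖ ≤ 1 := by
  -- first, u d⁻¹ = conj (u d)
  have key : ∀ z : ℂ, 0 ≤ 1 + z * (starRingEnd ℂ) z + (starRingEnd ℂ) z * u d⁻¹ + z * u d :=
    posdef_two h h1 d
  set A := u d⁻¹ with hA
  set B := u d with hB
  have him : ∀ z : ℂ, (1 + z * (starRingEnd ℂ) z + (starRingEnd ℂ) z * A + z * B).im = 0 := by
    intro z
    have := (Complex.le_def.1 (key z)).2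
    simpa using this.symm
  have h1' := him 1
  have h2' := him Complex.I
  simp [Complex.add_im, Complex.mul_im, Complex.conj_re, Complex.conj_im] at h1' h2'
  -- h1' : A.im + B.im = 0 ; h2' : -A.re + B.re = 0 (roughly)
  have hBA : B = (starRingEnd ℂ) A := by
    apply Complex.ext <;> simp [Complex.conj_re, Complex.conj_im] <;> linarith
  have := key (-A)
  rw [hBA] at this
  have hre := (Complex.le_def.1 this).1
  simp [Complex.add_re, Complex.mul_re, Complex.conj_re, Complex.conj_im] at hre
  have habs : ‖A‖ ^ 2 ≤ 1 := by
    have : A.re * A.re + A.im * A.im = ‖A‖ ^ 2 := by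
      rw [Complex.sq_norm, Complex.normSq_apply]
    nlinarith [hre]
  have : ‖A‖ ≤ 1 := by nlinarith [norm_nonneg A]
  have hBabs : ‖B‖ = ‖A‖ := by rw [hBA, Complex.norm_conj]
  rw [← hB, hBabs ] at *
  exact this

lemma finite_of_finsetsum_bdd {Γ : Type*} {h : Γ → ℝ} (hnn : ∀ γ, 0 ≤ h γ) {C t : ℝ}
    (ht : 0 < t) (hsum : ∀ G : Finset Γ, ∑ γ ∈ G, h γ ≤ C) :
    {γ : Γ | t ≤ h γ}.Finite := by
  rw [← Set.not_infinite]
  intro hinf'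
  obtain ⟨G, hGsub, hGcard⟩ := hinf'.exists_subset_card_eq (⌈C / t⌉.toNat + 1)
  have h1 : (G.card : ℝ) * t ≤ ∑ γ ∈ G, h γ := by
    calc (G.card : ℝ) * t = ∑ _γ ∈ G, t := by rw [Finset.sum_const, nsmul_eq_mul]
    _ ≤ _ := by
      apply Finset.sum_le_sum
      intro i hi
      simpa using hGsub hi
  have h2 := hsum G
  have h3 : (G.card : ℝ) ≤ C / t := by
    rw [le_div_iff₀ ht]
    linarith
  rw [hGcard] at h3
  have h4 : (⌈C / t⌉.toNat : ℝ) + 1 ≤ C / t := by push_cast at h3 ⊢; linarith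
  have h5 : C / t ≤ max 0 (⌈C / t⌉.toNat : ℝ) := by
    rcases le_or_gt (C/t) 0 with h | h
    · exact h.trans (le_max_left _ _)
    · calc C/t ≤ (⌈C/t⌉ : ℝ) := Int.le_ceil _
        _ ≤ _ := by
          rw [← Int.toNat_of_nonneg (Int.ceil_nonneg h.le)]
          push_cast
          exact le_max_right _ _
  have h6 : max 0 ((⌈C / t⌉.toNat : ℝ)) ≤ (⌈C / t⌉.toNat : ℝ) := by
    simp [max_le_iff]
  linarith

lemma integral_complex_nonneg {X : Type*} [MeasurableSpace X] {μ : Measure X} {F : X → ℂ}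
    (h : ∀ᵐ x ∂μ, 0 ≤ F x) : 0 ≤ ∫ x, F x ∂μ := by
  by_cases hint : Integrable F μ
  · rw [Complex.le_def]
    constructor
    · simp only [Complex.zero_re]
      have : ∫ x, (F x).re ∂μ = (∫ x, F x ∂μ).re := integral_re hint
      rw [← this]
      apply integral_nonneg_of_ae
      filter_upwards [h] with x hx
      exact (Complex.le_def.1 hx).1
    · simp only [Complex.zero_im]
      have : ∫ x, (F x).im ∂μ = (∫ x, F x ∂μ).im := integral_im hint
      rw [← this]
      symm
      have : ∀ᵐ x ∂μ, (F x).im = 0 := by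
        filter_upwards [h] with x hx
        exact ((Complex.le_def.1 hx).2).symm
      rw [integral_congr_ae this]
      simp
  · rw [integral_undef hint]

set_option maxHeartbeats 2000000 in
lemma main_step
    {Γ Δ Ω : Type*}
    [Group Γ] [Countable Γ] [Group Δ] [Countable Δ]
    [MeasurableSpace Δ] [MeasurableSingletonClass Δ]
    [MeasurableSpace Ω]
    (m : Measure Ω)
    [MulAction Γ Ω]
    (hΓmp : ∀ γ : Γ, MeasurePreserving (fun s : Ω => γ • s) m m)
    (r : Ω → Δ → Ω)
    (hr1 : ∀ s, r s 1 = s)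
    (hrmul : ∀ s δ₁ δ₂, r s (δ₁ * δ₂) = r (r s δ₁) δ₂)
    (hΔmp : ∀ δ : Δ, MeasurePreserving (fun s => r s δ) m m)
    (hcomm : ∀ (γ : Γ) (s : Ω) (δ : Δ), γ • r s δ = r (γ • s) δ)
    (X : Set Ω) (hXmeas : MeasurableSet X)
    (hXfund : ∀ s : Ω, ∃! δ : Δ, r s δ ∈ X)
    (Y : Set Ω) (hYmeas : MeasurableSet Y)
    (hYfund : ∀ s : Ω, ∃! γ : Γ, γ⁻¹ • s ∈ Y)
    (α : Γ → Ω → Δ)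
    (hαmeas : ∀ γ : Γ, Measurable (α γ))
    (hα : ∀ γ : Γ, ∀ x ∈ X, r (γ • x) (α γ x)⁻¹ ∈ X)
    (hind : ∀ γ : Γ, MeasurePreserving (fun x => r (γ • x) (α γ x)⁻¹)
      (m.restrict X) (m.restrict X))
    (f : ℕ → Ω → ℝ)
    (hfmeas : ∀ n, Measurable (f n)) (hfnonneg : ∀ n x, 0 ≤ f n x)
    (hfint : ∀ n, ∫ x in X, f n x ∂m = 1)
    (hfinv : ∀ γ : Γ, Tendsto
      (fun n => ∫ x in X, |f n (r (γ⁻¹ • x) (α γ⁻¹ x)⁻¹) - f n x| ∂m) atTop (nhds 0))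
    (u : ℕ → Δ → ℂ)
    (hupd : ∀ n, IsPosDefFn (u n))
    (hu1 : ∀ n, u n 1 = 1)
    (huC0 : ∀ n, ∀ ε : ℝ, 0 < ε → {d : Δ | ε ≤ ‖u n d‖}.Finite)
    (hulim : ∀ d : Δ, Tendsto (fun n => u n d) atTop (nhds 1))
    (E : Finset Γ) (ε : ℝ) (hε : 0 < ε) :
    ∃ w : Γ → ℂ, IsPosDefFn w ∧ w 1 = 1 ∧
      (∀ t : ℝ, 0 < t → {γ : Γ | t ≤ ‖w γ‖}.Finite) ∧
      ∀ γ ∈ E, ‖w γ - 1‖ < ε := by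
  classical
  set μ := m.restrict X with hμdef
  let T : Γ → Ω → Ω := fun γ x => r (γ • x) (α γ x)⁻¹
  have hTmp : ∀ γ, MeasurePreserving (T γ) μ μ := hind
  have hTmeas : ∀ γ, Measurable (T γ) := by
    intro γ
    have h1 : Measurable fun p : Ω × Δ => r p.1 p.2 :=
      measurable_from_prod_countable_left fun d => (hΔmp d).measurable
    exact h1.comp ((hΓmp γ).measurable.prodMk
      ((measurable_of_countable _).comp (hαmeas γ)))
  have hTX : ∀ γ, ∀ x ∈ X, T γ x ∈ X := fun γ x hx => hα γ x hx
  have hαuniq : ∀ (γ : Γ) (x : Ω), x ∈ X → ∀ δ : Δ, r (γ • x) δ⁻¹ ∈ X → δ = α γ x := by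
    intro γ x hx δ hδ
    exact inv_injective ((hXfund (γ • x)).unique hδ (hα γ x hx))
  have hα1 : ∀ x ∈ X, α 1 x = 1 := by
    intro x hx
    refine (hαuniq 1 x hx 1 ?_).symm
    simpa [hr1] using hx
  have hT1 : ∀ x ∈ X, T 1 x = x := by
    intro x hx
    show r ((1:Γ) • x) (α 1 x)⁻¹ = x
    rw [hα1 x hx]; simp [hr1]
  have hcoc : ∀ (γ₁ γ₂ : Γ) (x : Ω), x ∈ X → α (γ₁ * γ₂) x = α γ₁ (T γ₂ x) * α γ₂ x := by
    intro γ₁ γ₂ x hx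
    refine (hαuniq (γ₁ * γ₂) x hx _ ?_).symm
    have key : r ((γ₁ * γ₂) • x) (α γ₁ (T γ₂ x) * α γ₂ x)⁻¹ = T γ₁ (T γ₂ x) := by
      rw [mul_inv_rev, hrmul, mul_smul]
      show r (r (γ₁ • γ₂ • x) (α γ₂ x)⁻¹) (α γ₁ (T γ₂ x))⁻¹ = _
      rw [← hcomm]
    rw [key]
    exact hTX γ₁ _ (hTX γ₂ x hx)
  have hTmul : ∀ (γ₁ γ₂ : Γ) (x : Ω), x ∈ X → T (γ₁ * γ₂) x = T γ₁ (T γ₂ x) := by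
    intro γ₁ γ₂ x hx
    show r ((γ₁ * γ₂) • x) (α (γ₁ * γ₂) x)⁻¹ = _
    rw [hcoc γ₁ γ₂ x hx, mul_inv_rev, hrmul, mul_smul]
    show r (r (γ₁ • γ₂ • x) (α γ₂ x)⁻¹) (α γ₁ (T γ₂ x))⁻¹ = _
    rw [← hcomm]
  have hTinv : ∀ (γ : Γ) (x : Ω), x ∈ X → T γ⁻¹ (T γ x) = x := by
    intro γ x hx
    have h := hTmul γ⁻¹ γ x hx
    rw [inv_mul_cancel, hT1 x hx] at h
    exact h.symm
  have hαinv : ∀ (γ : Γ) (x : Ω), x ∈ X → α γ⁻¹ (T γ x) = (α γ x)⁻¹ := by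
    intro γ x hx
    have h := hcoc γ⁻¹ γ x hx
    rw [inv_mul_cancel, hα1 x hx] at h
    exact eq_inv_of_mul_eq_one_left h.symm
  -- change of variables
  have hCoVC : ∀ (γ : Γ) (H : Ω → ℂ), Measurable H → ∫ x, H x ∂μ = ∫ x, H (T γ x) ∂μ := by
    intro γ H hH
    calc ∫ x, H x ∂μ = ∫ y, H y ∂(Measure.map (T γ) μ) := by rw [(hTmp γ).map_eq]
      _ = ∫ x, H (T γ x) ∂μ := integral_map (hTmp γ).aemeasurable
        (by rw [(hTmp γ).map_eq]; exact hH.aestronglyMeasurable)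
  have hCoVR : ∀ (γ : Γ) (H : Ω → ℝ), Measurable H → ∫ x, H x ∂μ = ∫ x, H (T γ x) ∂μ := by
    intro γ H hH
    calc ∫ x, H x ∂μ = ∫ y, H y ∂(Measure.map (T γ) μ) := by rw [(hTmp γ).map_eq]
      _ = ∫ x, H (T γ x) ∂μ := integral_map (hTmp γ).aemeasurable
        (by rw [(hTmp γ).map_eq]; exact hH.aestronglyMeasurable)
  have hIntComp : ∀ (γ : Γ) (H : Ω → ℝ), Measurable H → Integrable H μ →
      Integrable (fun x => H (T γ x)) μ := by
    intro γ H hH hint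
    exact ((hTmp γ).integrable_comp hH.aestronglyMeasurable).mpr hint
  -- constants
  set ε₁ : ℝ := min ε 1 / 16 with hε₁def
  have hε₁pos : 0 < ε₁ := by
    have : 0 < min ε 1 := lt_min hε one_pos
    positivity
  have hε₁le : ε₁ ≤ 1 / 16 := by
    have : min ε 1 ≤ 1 := min_le_right _ _
    rw [hε₁def]; linarith
  have h10ε : 10 * ε₁ < ε := by
    rcases le_total ε 1 with h | h
    · rw [hε₁def, min_eq_left h]; linarith
    · rw [hε₁def, min_eq_right h]; linarith
  -- choose k
  obtain ⟨k, hk⟩ : ∃ k, ∀ γ ∈ E, ∫ x, |f k (T γ⁻¹ x) - f k x| ∂μ < ε₁ := by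
    have hev : ∀ᶠ k in atTop, ∀ γ ∈ E, ∫ x, |f k (T γ⁻¹ x) - f k x| ∂μ < ε₁ := by
      rw [Finset.eventually_all]
      intro γ _
      exact (hfinv γ).eventually (gt_mem_nhds hε₁pos)
    exact hev.exists
  have hfkint : Integrable (f k) μ := by
    by_contra hni
    have h0 := integral_undef (μ := μ) (f := f k) hni
    rw [hμdef] at h0
    rw [hfint k] at h0
    norm_num at h0
  -- choose the finite set F and the support S
  obtain ⟨gΓ, hgΓ⟩ := exists_surjective_nat Γ
  let W : Γ → Set Ω := fun γ => {s | γ⁻¹ • s ∈ Y}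
  have hWmeas : ∀ γ, MeasurableSet (W γ) := fun γ => (hΓmp γ⁻¹).measurable hYmeas
  let SS : Finset Γ → Set Ω := fun F => X ∩ ⋃ γ ∈ F, W γ
  have hSSmeas : ∀ F, MeasurableSet (SS F) :=
    fun F => hXmeas.inter (F.measurableSet_biUnion (fun γ _ => hWmeas γ))
  obtain ⟨F, hF⟩ : ∃ F : Finset Γ, 1 - ε₁ < ∫ x, Set.indicator (SS F) (f k) x ∂μ := by
    have hDCT := tendsto_integral_of_dominated_convergence (μ := μ)
      (F := fun N x => Set.indicator (SS ((Finset.range N).image gΓ)) (f k) x)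
      (f := f k) (f k)
      (fun N => ((hfmeas k).indicator (hSSmeas _)).aestronglyMeasurable)
      hfkint
      (fun N => by
        filter_upwards with x
        rw [Real.norm_eq_abs, abs_le]
        constructor
        · refine le_trans (by linarith [hfnonneg k x]) (Set.indicator_nonneg (fun y _ => hfnonneg k y) x)
        · exact Set.indicator_le_self' (fun y _ => hfnonneg k y) x)
      (by
        filter_upwards [ae_restrict_mem hXmeas] with x hx
        obtain ⟨γ₀, hγ₀, _⟩ := hYfund x
        obtain ⟨i, hi⟩ := hgΓ γ₀
        apply tendsto_atTop_of_eventually_const (i₀ := i + 1)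
        intro N hN
        rw [Set.indicator_of_mem]
        refine ⟨hx, ?_⟩
        rw [Set.mem_iUnion₂]
        exact ⟨γ₀, Finset.mem_image.2 ⟨i, Finset.mem_range.2 (by omega), hi⟩, hγ₀⟩)
    have hone : ∫ x, f k x ∂μ = 1 := by rw [hμdef]; exact hfint k
    rw [hone] at hDCT
    obtain ⟨N, hN⟩ := (hDCT.eventually (lt_mem_nhds (show 1 - ε₁ < 1 by linarith))).exists
    exact ⟨(Finset.range N).image gΓ, hN⟩
  -- the truncated density and its square root
  set S : Set Ω := SS F with hSdef
  have hSmeas : MeasurableSet S := hSSmeas F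
  have hSsubX : S ⊆ X := Set.inter_subset_left
  have hSmem : ∀ x ∈ S, ∃ γ₂ ∈ F, γ₂⁻¹ • x ∈ Y := by
    intro x hx
    obtain ⟨-, hx2⟩ := hx
    rw [Set.mem_iUnion₂] at hx2
    obtain ⟨γ₂, hγ₂F, hγ₂⟩ := hx2
    exact ⟨γ₂, hγ₂F, hγ₂⟩
  set ftil : Ω → ℝ := Set.indicator S (f k) with hftildef
  have hftil_meas : Measurable ftil := (hfmeas k).indicator hSmeas
  have hftil_nonneg : ∀ x, 0 ≤ ftil x := Set.indicator_nonneg (fun y _ => hfnonneg k y)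
  have hftil_le : ∀ x, ftil x ≤ f k x := Set.indicator_le_self' (fun y _ => hfnonneg k y)
  have hftil_int : Integrable ftil μ := by
    refine hfkint.mono' hftil_meas.aestronglyMeasurable ?_
    filter_upwards with x
    rw [Real.norm_eq_abs, abs_of_nonneg (hftil_nonneg x)]
    exact hftil_le x
  set c : ℝ := ∫ x, ftil x ∂μ with hcdef
  have hclb : 1 - ε₁ < c := hF
  have hcub : c ≤ 1 := by
    rw [hcdef]
    calc ∫ x, ftil x ∂μ ≤ ∫ x, f k x ∂μ := integral_mono hftil_int hfkint hftil_le
    _ = 1 := by rw [hμdef]; exact hfint k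
  have hcpos : 0 < c := by linarith
  set g : Ω → ℝ := fun x => Real.sqrt (ftil x) with hgdef
  have hg_meas : Measurable g := hftil_meas.sqrt
  have hg_nonneg : ∀ x, 0 ≤ g x := fun x => Real.sqrt_nonneg _
  have hg_sq : ∀ x, g x * g x = ftil x := fun x => Real.mul_self_sqrt (hftil_nonneg x)
  have hg_zero : ∀ x, x ∉ S → g x = 0 := by
    intro x hx
    rw [hgdef]
    simp only [hftildef, Set.indicator_of_notMem hx, Real.sqrt_zero]
  -- integrability pack
  have hftilT_int : ∀ γ : Γ, Integrable (fun x => ftil (T γ x)) μ :=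
    fun γ => hIntComp γ ftil hftil_meas hftil_int
  have hprod_int : ∀ p q : Ω → ℝ, Measurable p → Measurable q →
      (∀ x, 0 ≤ p x) → (∀ x, 0 ≤ q x) →
      Integrable (fun x => p x * p x) μ → Integrable (fun x => q x * q x) μ →
      Integrable (fun x => p x * q x) μ := by
    intro p q hp hq hp0 hq0 hp2 hq2
    refine ((hp2.add hq2).div_const 2).mono' (hp.mul hq).aestronglyMeasurable ?_
    filter_upwards with x
    simp only [Pi.add_apply]
    rw [Real.norm_eq_abs, abs_of_nonneg (mul_nonneg (hp0 x) (hq0 x))]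
    nlinarith [sq_nonneg (p x - q x)]
  have hgT2_int : ∀ γ : Γ, Integrable (fun x => g (T γ x) * g (T γ x)) μ := by
    intro γ
    have : (fun x => g (T γ x) * g (T γ x)) = fun x => ftil (T γ x) := by
      funext x; exact hg_sq (T γ x)
    rw [this]; exact hftilT_int γ
  have hg2_int : Integrable (fun x => g x * g x) μ := by
    have : (fun x => g x * g x) = ftil := by funext x; exact hg_sq x
    rw [this]; exact hftil_int
  have hggT_int : ∀ γ γ' : Γ, Integrable (fun x => g (T γ x) * g (T γ' x)) μ :=
    fun γ γ' => hprod_int _ _ (hg_meas.comp (hTmeas γ)) (hg_meas.comp (hTmeas γ'))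
      (fun x => hg_nonneg _) (fun x => hg_nonneg _) (hgT2_int γ) (hgT2_int γ')
  have hgg1_int : ∀ γ : Γ, Integrable (fun x => g (T γ x) * g x) μ :=
    fun γ => hprod_int _ _ (hg_meas.comp (hTmeas γ)) hg_meas
      (fun x => hg_nonneg _) (fun x => hg_nonneg _) (hgT2_int γ) hg2_int
  -- bound on u
  have hu_bd : ∀ n d, ‖u n d‖ ≤ 1 := fun n => posdef_abs_le_one (hupd n) (hu1 n)
  -- the positive definite kernels
  set w0 : ℕ → Γ → ℂ := fun n γ =>
    ∫ x, (((g (T γ⁻¹ x) * g x : ℝ) : ℂ) * u n ((α γ⁻¹ x)⁻¹)) ∂μ with hw0def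
  set I : Γ → ℝ := fun γ => ∫ x, g (T γ⁻¹ x) * g x ∂μ with hIdef
  have huinv_meas : ∀ n : ℕ, Measurable (fun d : Δ => u n d⁻¹) :=
    fun n => measurable_of_countable _
  have hCmeas : ∀ (n : ℕ) (γ γ' : Γ), Measurable
      (fun x => ((g (T γ x) * g (T γ' x) : ℝ) : ℂ)) :=
    fun n γ γ' => Complex.measurable_ofReal.comp
      ((hg_meas.comp (hTmeas γ)).mul (hg_meas.comp (hTmeas γ')))
  have hCInt : ∀ (φ : Ω → ℝ) (ψ : Ω → ℂ), Measurable φ → Measurable ψ →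
      Integrable φ μ → (∀ x, 0 ≤ φ x) → (∀ x, ‖ψ x‖ ≤ 1) →
      Integrable (fun x => ((φ x : ℂ) * ψ x)) μ := by
    intro φ ψ hφ hψ hφint hφ0 hψbd
    refine hφint.mono' ((Complex.measurable_ofReal.comp hφ).mul hψ).aestronglyMeasurable ?_
    filter_upwards with x
    rw [norm_mul, Complex.norm_real, Real.norm_eq_abs,
      abs_of_nonneg (hφ0 x)]
    calc φ x * ‖ψ x‖ ≤ φ x * 1 :=
          mul_le_mul_of_nonneg_left (hψbd x) (hφ0 x)
      _ = φ x := mul_one _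
  -- w0 n 1 = c
  have hw0_1 : ∀ n, w0 n 1 = (c : ℂ) := by
    intro n
    have hcongr : ∀ᵐ x ∂μ, (((g (T (1:Γ)⁻¹ x) * g x : ℝ) : ℂ) * u n ((α (1:Γ)⁻¹ x)⁻¹))
        = ((ftil x : ℝ) : ℂ) := by
      filter_upwards [ae_restrict_mem hXmeas] with x hx
      rw [inv_one, hT1 x hx, hα1 x hx, inv_one, hu1 n, mul_one, hg_sq x]
    show (∫ x, (((g (T (1:Γ)⁻¹ x) * g x : ℝ) : ℂ) * u n ((α (1:Γ)⁻¹ x)⁻¹)) ∂μ) = (c : ℂ)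
    rw [integral_congr_ae hcongr, hcdef]
    exact integral_ofReal
  -- I γ ≤ c
  have hftilT_c : ∀ γ : Γ, ∫ x, ftil (T γ x) ∂μ = c := by
    intro γ
    rw [hcdef, hCoVR γ ftil hftil_meas]
  have hI_le : ∀ γ : Γ, I γ ≤ c := by
    intro γ
    have hle : I γ ≤ ∫ x, (ftil (T γ⁻¹ x) + ftil x) / 2 ∂μ := by
      refine integral_mono (hgg1_int γ⁻¹) (((hftilT_int γ⁻¹).add hftil_int).div_const 2) ?_
      intro x
      have h1 := hg_sq (T γ⁻¹ x)
      have h2 := hg_sq x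
      have := sq_nonneg (g (T γ⁻¹ x) - g x)
      simp only
      nlinarith [hg_nonneg (T γ⁻¹ x), hg_nonneg x]
    calc I γ ≤ ∫ x, (ftil (T γ⁻¹ x) + ftil x) / 2 ∂μ := hle
      _ = ((∫ x, ftil (T γ⁻¹ x) ∂μ) + ∫ x, ftil x ∂μ) / 2 := by
          rw [integral_div, integral_add (hftilT_int γ⁻¹) hftil_int]
      _ = c := by rw [hftilT_c γ⁻¹, ← hcdef]; ring
  -- I γ close to c for γ ∈ E
  have hI_lb : ∀ γ ∈ E, c - 4 * ε₁ < I γ := by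
    intro γ hγE
    set rest : Ω → ℝ := fun x => f k x - ftil x with hrestdef
    have hrest_nonneg : ∀ x, 0 ≤ rest x := fun x => by
      simp only [hrestdef]; linarith [hftil_le x]
    have hrest_meas : Measurable rest := (hfmeas k).sub hftil_meas
    have hrest_int : Integrable rest μ := hfkint.sub hftil_int
    have hrest_c : ∫ x, rest x ∂μ = 1 - c := by
      rw [hrestdef]
      simp only
      rw [integral_sub hfkint hftil_int, ← hcdef]
      congr 1
      rw [hμdef]; exact hfint k
    have habs_int : Integrable (fun x => |ftil (T γ⁻¹ x) - ftil x|) μ :=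
      ((hftilT_int γ⁻¹).sub hftil_int).abs
    have hfkabs_int : Integrable (fun x => |f k (T γ⁻¹ x) - f k x|) μ :=
      ((hIntComp γ⁻¹ (f k) (hfmeas k) hfkint).sub hfkint).abs
    have hBtil : ∫ x, |ftil (T γ⁻¹ x) - ftil x| ∂μ < 4 * ε₁ := by
      have hptw : ∀ x, |ftil (T γ⁻¹ x) - ftil x| ≤
          2 * |f k (T γ⁻¹ x) - f k x| + rest (T γ⁻¹ x) + rest x := by
        intro x
        have e1 : rest (T γ⁻¹ x) = f k (T γ⁻¹ x) - ftil (T γ⁻¹ x) := rfl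
        have e2 : rest x = f k x - ftil x := rfl
        rw [e1, e2]
        have hnn := abs_nonneg (f k (T γ⁻¹ x) - f k x)
        have hla := le_abs_self (f k (T γ⁻¹ x) - f k x)
        have hlb := neg_abs_le (f k (T γ⁻¹ x) - f k x)
        rcases Classical.em (T γ⁻¹ x ∈ S) with h1 | h1 <;>
          rcases Classical.em (x ∈ S) with h2 | h2
        · simp only [hftildef, Set.indicator_of_mem h1, Set.indicator_of_mem h2]
          linarith
        · simp only [hftildef, Set.indicator_of_mem h1, Set.indicator_of_notMem h2, sub_zero]
          rw [abs_of_nonneg (hfnonneg k _)]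
          linarith [hfnonneg k x]
        · simp only [hftildef, Set.indicator_of_notMem h1, Set.indicator_of_mem h2, zero_sub,
            abs_neg, sub_zero]
          rw [abs_of_nonneg (hfnonneg k _)]
          linarith [hfnonneg k (T γ⁻¹ x)]
        · simp only [hftildef, Set.indicator_of_notMem h1, Set.indicator_of_notMem h2, sub_zero,
            sub_self, abs_zero]
          linarith [hfnonneg k x, hfnonneg k (T γ⁻¹ x)]
      have i1 : Integrable (fun x => 2 * |f k (T γ⁻¹ x) - f k x|) μ := hfkabs_int.const_mul 2
      have i2 : Integrable (fun x => rest (T γ⁻¹ x)) μ := hIntComp γ⁻¹ rest hrest_meas hrest_int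
      have i12 : Integrable (fun x => 2 * |f k (T γ⁻¹ x) - f k x| + rest (T γ⁻¹ x)) μ := i1.add i2
      have i123 : Integrable
          (fun x => 2 * |f k (T γ⁻¹ x) - f k x| + rest (T γ⁻¹ x) + rest x) μ := i12.add hrest_int
      have hrestT_c : ∫ x, rest (T γ⁻¹ x) ∂μ = 1 - c := by
        rw [← hCoVR γ⁻¹ rest hrest_meas]
        exact hrest_c
      have hint : ∫ x, |ftil (T γ⁻¹ x) - ftil x| ∂μ ≤
          2 * (∫ x, |f k (T γ⁻¹ x) - f k x| ∂μ) + (1 - c) + (1 - c) := by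
        calc ∫ x, |ftil (T γ⁻¹ x) - ftil x| ∂μ
            ≤ ∫ x, (2 * |f k (T γ⁻¹ x) - f k x| + rest (T γ⁻¹ x) + rest x) ∂μ :=
              integral_mono habs_int i123 hptw
          _ = 2 * (∫ x, |f k (T γ⁻¹ x) - f k x| ∂μ) + (1 - c) + (1 - c) := by
              rw [integral_add i12 hrest_int, integral_add i1 i2, integral_const_mul,
                hrest_c, hrestT_c]
      have h1c : 1 - c < ε₁ := by linarith
      have hkγ := hk γ hγE
      linarith
    have hmin : ∀ x, ftil x - |ftil (T γ⁻¹ x) - ftil x| ≤ g (T γ⁻¹ x) * g x := by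
      intro x
      have ha := hftil_nonneg (T γ⁻¹ x)
      have hb := hftil_nonneg x
      rcases le_total (ftil (T γ⁻¹ x)) (ftil x) with h | h
      · rw [abs_of_nonpos (by linarith), hgdef]
        simp only
        have : Real.sqrt (ftil (T γ⁻¹ x)) * Real.sqrt (ftil (T γ⁻¹ x)) ≤
            Real.sqrt (ftil (T γ⁻¹ x)) * Real.sqrt (ftil x) :=
          mul_le_mul_of_nonneg_left (Real.sqrt_le_sqrt h) (Real.sqrt_nonneg _)
        rw [Real.mul_self_sqrt ha] at this
        linarith
      · rw [abs_of_nonneg (by linarith), hgdef]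
        simp only
        have : Real.sqrt (ftil x) * Real.sqrt (ftil x) ≤
            Real.sqrt (ftil (T γ⁻¹ x)) * Real.sqrt (ftil x) :=
          mul_le_mul_of_nonneg_right (Real.sqrt_le_sqrt h) (Real.sqrt_nonneg _)
        rw [Real.mul_self_sqrt hb] at this
        linarith
    have hIlow : c - ∫ x, |ftil (T γ⁻¹ x) - ftil x| ∂μ ≤ I γ := by
      have hsub_int : Integrable (fun x => ftil x - |ftil (T γ⁻¹ x) - ftil x|) μ :=
        hftil_int.sub habs_int
      have hmono := integral_mono hsub_int (hgg1_int γ⁻¹) hmin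
      have hsplit : ∫ x, (ftil x - |ftil (T γ⁻¹ x) - ftil x|) ∂μ
          = c - ∫ x, |ftil (T γ⁻¹ x) - ftil x| ∂μ := by
        rw [integral_sub hftil_int habs_int, ← hcdef]
      rw [hsplit] at hmono
      exact hmono
    linarith
  -- limit of w0 n γ
  have hw0_lim : ∀ γ : Γ, Tendsto (fun n => w0 n γ) atTop (nhds ((I γ : ℝ) : ℂ)) := by
    intro γ
    have hmeas1 : Measurable fun x => ((g (T γ⁻¹ x) * g x : ℝ) : ℂ) :=
      Complex.measurable_ofReal.comp ((hg_meas.comp (hTmeas γ⁻¹)).mul hg_meas)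
    have hlim := tendsto_integral_of_dominated_convergence (μ := μ)
      (F := fun n x => (((g (T γ⁻¹ x) * g x : ℝ) : ℂ) * u n ((α γ⁻¹ x)⁻¹)))
      (f := fun x => ((g (T γ⁻¹ x) * g x : ℝ) : ℂ))
      (fun x => g (T γ⁻¹ x) * g x)
      (fun n => (hmeas1.mul ((huinv_meas n).comp (hαmeas γ⁻¹))).aestronglyMeasurable)
      (hgg1_int γ⁻¹)
      (fun n => by
        filter_upwards with x
        rw [norm_mul, Complex.norm_real, Real.norm_eq_abs,
          abs_of_nonneg (mul_nonneg (hg_nonneg _) (hg_nonneg _))]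
        calc _ ≤ (g (T γ⁻¹ x) * g x) * 1 := mul_le_mul_of_nonneg_left (hu_bd n _)
              (mul_nonneg (hg_nonneg _) (hg_nonneg _))
          _ = _ := mul_one _)
      (by
        filter_upwards with x
        have := (hulim ((α γ⁻¹ x)⁻¹)).const_mul (((g (T γ⁻¹ x) * g x : ℝ) : ℂ))
        simpa using this)
    have : (∫ x, ((g (T γ⁻¹ x) * g x : ℝ) : ℂ) ∂μ) = ((I γ : ℝ) : ℂ) := integral_ofReal
    rw [this] at hlim
    exact hlim
  -- positive definiteness of w0
  have hw0_pd : ∀ n' : ℕ, IsPosDefFn (w0 n') := by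
    intro n' nn gs cs
    -- the transformed integrand
    set GG : Fin nn → Fin nn → Ω → ℂ := fun i j y =>
      cs i * (starRingEnd ℂ) (cs j) *
        ((((g (T (gs i)⁻¹ y) * g (T (gs j)⁻¹ y) : ℝ)) : ℂ) *
          u n' (α (gs j)⁻¹ y * (α (gs i)⁻¹ y)⁻¹)) with hGGdef
    have hGG_meas : ∀ i j, Measurable (GG i j) := by
      intro i j
      apply Measurable.const_mul
      refine (Complex.measurable_ofReal.comp
        ((hg_meas.comp (hTmeas (gs i)⁻¹)).mul (hg_meas.comp (hTmeas (gs j)⁻¹)))).mul ?_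
      have : Measurable fun p : Δ × Δ => u n' (p.1 * p.2⁻¹) := measurable_of_countable _
      exact this.comp ((hαmeas (gs j)⁻¹).prodMk (hαmeas (gs i)⁻¹))
    have hGG_int : ∀ i j, Integrable (GG i j) μ := by
      intro i j
      apply Integrable.const_mul
      refine hCInt _ _ ((hg_meas.comp (hTmeas (gs i)⁻¹)).mul (hg_meas.comp (hTmeas (gs j)⁻¹)))
        ?_ (hggT_int (gs i)⁻¹ (gs j)⁻¹) (fun x => mul_nonneg (hg_nonneg _) (hg_nonneg _))
        (fun x => hu_bd n' _)
      have : Measurable fun p : Δ × Δ => u n' (p.1 * p.2⁻¹) := measurable_of_countable _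
      exact this.comp ((hαmeas (gs j)⁻¹).prodMk (hαmeas (gs i)⁻¹))
    -- each term of the sum equals the integral of GG i j
    have hterm : ∀ i j : Fin nn, cs i * (starRingEnd ℂ) (cs j) * w0 n' ((gs j)⁻¹ * gs i)
        = ∫ y, GG i j y ∂μ := by
      intro i j
      set γ : Γ := (gs j)⁻¹ * gs i with hγdef
      have hstep1 : w0 n' γ = ∫ y,
          (((g (T γ⁻¹ (T (gs j)⁻¹ y)) * g (T (gs j)⁻¹ y) : ℝ)) : ℂ) *
            u n' ((α γ⁻¹ (T (gs j)⁻¹ y))⁻¹) ∂μ := by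
        show (∫ x, (((g (T γ⁻¹ x) * g x : ℝ) : ℂ) * u n' ((α γ⁻¹ x)⁻¹)) ∂μ) = _
        exact hCoVC (gs j)⁻¹ _ ((Complex.measurable_ofReal.comp
          ((hg_meas.comp (hTmeas γ⁻¹)).mul hg_meas)).mul
          (((huinv_meas n').comp (hαmeas γ⁻¹))))
      have hstep2 : ∫ y,
          (((g (T γ⁻¹ (T (gs j)⁻¹ y)) * g (T (gs j)⁻¹ y) : ℝ)) : ℂ) *
            u n' ((α γ⁻¹ (T (gs j)⁻¹ y))⁻¹) ∂μ = ∫ y,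
          ((((g (T (gs i)⁻¹ y) * g (T (gs j)⁻¹ y) : ℝ)) : ℂ) *
            u n' (α (gs j)⁻¹ y * (α (gs i)⁻¹ y)⁻¹)) ∂μ := by
        refine integral_congr_ae ?_
        filter_upwards [ae_restrict_mem hXmeas] with y hy
        have he : γ⁻¹ * (gs j)⁻¹ = (gs i)⁻¹ := by rw [hγdef]; group
        have h1 : T γ⁻¹ (T (gs j)⁻¹ y) = T (gs i)⁻¹ y := by
          rw [← hTmul γ⁻¹ (gs j)⁻¹ y hy, he]
        have h2 : α γ⁻¹ (T (gs j)⁻¹ y) = α (gs i)⁻¹ y * (α (gs j)⁻¹ y)⁻¹ := by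
          have h3 := hcoc γ⁻¹ (gs j)⁻¹ y hy
          rw [he] at h3
          rw [eq_mul_inv_iff_mul_eq]
          exact h3.symm
        rw [h1, h2, mul_inv_rev, inv_inv]
      rw [hstep1, hstep2, ← integral_const_mul]
    have hsum : ∑ i, ∑ j, cs i * (starRingEnd ℂ) (cs j) * w0 n' ((gs j)⁻¹ * gs i)
        = ∫ y, (∑ i, ∑ j, GG i j y) ∂μ := by
      rw [integral_finset_sum Finset.univ
        (fun i _ => integrable_finset_sum Finset.univ (fun j _ => hGG_int i j))]
      refine Finset.sum_congr rfl fun i _ => ?_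
      rw [integral_finset_sum Finset.univ (fun j _ => hGG_int i j)]
      exact Finset.sum_congr rfl fun j _ => hterm i j
    rw [hsum]
    apply integral_complex_nonneg
    filter_upwards [ae_restrict_mem hXmeas] with y hy
    have hpt := hupd n' nn (fun i => (α (gs i)⁻¹ y)⁻¹)
      (fun i => cs i * ((g (T (gs i)⁻¹ y) : ℝ) : ℂ))
    refine le_of_le_of_eq hpt ?_
    refine Finset.sum_congr rfl fun i _ => Finset.sum_congr rfl fun j _ => ?_
    rw [hGGdef]
    simp only [mul_inv_rev, inv_inv, map_mul, Complex.conj_ofReal, Complex.ofReal_mul]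
    ring
  -- choose n₀
  obtain ⟨n₀, hn₀⟩ : ∃ n₀ : ℕ, ∀ γ ∈ E, ‖w0 n₀ γ - ((I γ : ℝ) : ℂ)‖ < ε₁ := by
    have hev : ∀ᶠ n in atTop, ∀ γ ∈ E, ‖w0 n γ - ((I γ : ℝ) : ℂ)‖ < ε₁ := by
      rw [Finset.eventually_all]
      intro γ _
      have := Metric.tendsto_nhds.1 (hw0_lim γ) ε₁ hε₁pos
      filter_upwards [this] with n hn
      rw [← Complex.dist_eq]
      exact hn
    exact hev.exists
  -- the candidate function
  set w : Γ → ℂ := fun γ => ((c : ℝ) : ℂ)⁻¹ * w0 n₀ γ with hwdef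
  have hcC_ne : ((c : ℝ) : ℂ) ≠ 0 := by
    simp only [ne_eq, Complex.ofReal_eq_zero]
    exact ne_of_gt hcpos
  have hw1 : w 1 = 1 := by
    rw [hwdef]
    simp only
    rw [hw0_1 n₀, inv_mul_cancel₀ hcC_ne]
  have hwpd : IsPosDefFn w := by
    intro nn gs cs
    have heq : ∑ i, ∑ j, cs i * (starRingEnd ℂ) (cs j) * w ((gs j)⁻¹ * gs i)
        = ((c : ℝ) : ℂ)⁻¹ * ∑ i, ∑ j, cs i * (starRingEnd ℂ) (cs j) * w0 n₀ ((gs j)⁻¹ * gs i) := by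
      rw [Finset.mul_sum]
      refine Finset.sum_congr rfl fun i _ => ?_
      rw [Finset.mul_sum]
      refine Finset.sum_congr rfl fun j _ => ?_
      rw [hwdef]
      ring
    rw [heq]
    have hinv_nonneg : (0 : ℂ) ≤ ((c : ℝ) : ℂ)⁻¹ := by
      rw [← Complex.ofReal_inv]
      rw [Complex.le_def]
      constructor
      · simp only [Complex.zero_re, Complex.ofReal_re]
        positivity
      · simp
    exact mul_nonneg hinv_nonneg (hw0_pd n₀ nn gs cs)
  have hwclose : ∀ γ ∈ E, ‖w γ - 1‖ < ε := by
    intro γ hγE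
    have h1 : w γ - 1 = ((c : ℝ) : ℂ)⁻¹ * (w0 n₀ γ - ((c : ℝ) : ℂ)) := by
      rw [hwdef]
      field_simp
    have h2 : ‖w0 n₀ γ - ((c : ℝ) : ℂ)‖ < 5 * ε₁ := by
      have h3 : ‖w0 n₀ γ - ((I γ : ℝ) : ℂ)‖ < ε₁ := hn₀ γ hγE
      have h4 : ‖((I γ : ℝ) : ℂ) - ((c : ℝ) : ℂ)‖ < 4 * ε₁ := by
        rw [← Complex.ofReal_sub, Complex.norm_real, Real.norm_eq_abs, abs_of_nonpos (by linarith [hI_le γ])]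
        have := hI_lb γ hγE
        linarith
      calc ‖w0 n₀ γ - ((c : ℝ) : ℂ)‖
          = ‖(w0 n₀ γ - ((I γ : ℝ) : ℂ)) + (((I γ : ℝ) : ℂ) - ((c : ℝ) : ℂ))‖ := by
            ring_nf
        _ ≤ _ := norm_add_le _ _
        _ < 5 * ε₁ := by linarith
    rw [h1, norm_mul, norm_inv, Complex.norm_real, Real.norm_eq_abs, abs_of_pos hcpos]
    have hc2 : (1 : ℝ) / 2 ≤ c := by linarith
    have : c⁻¹ ≤ 2 := by
      rw [inv_le_comm₀ hcpos (by norm_num)]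
      linarith
    calc c⁻¹ * ‖w0 n₀ γ - ((c : ℝ) : ℂ)‖ ≤ 2 * ‖w0 n₀ γ - ((c : ℝ) : ℂ)‖ :=
          mul_le_mul_of_nonneg_right this (norm_nonneg _)
      _ < 2 * (5 * ε₁) := by
          have := norm_nonneg (w0 n₀ γ - ((c : ℝ) : ℂ))
          linarith
      _ < ε := by linarith
  -- the C0 property
  have hwC0 : ∀ t : ℝ, 0 < t → {γ : Γ | t ≤ ‖w γ‖}.Finite := by
    intro t ht
    set t' : ℝ := t * c / 2 with ht'def
    have ht'pos : 0 < t' := by rw [ht'def]; positivity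
    have hKfin : {d : Δ | t' ≤ ‖u n₀ d‖}.Finite := huC0 n₀ t' ht'pos
    have hFδfin : {δ : Δ | t' ≤ ‖u n₀ δ⁻¹‖}.Finite := by
      have heq : {δ : Δ | t' ≤ ‖u n₀ δ⁻¹‖} =
          (fun δ : Δ => δ⁻¹) ⁻¹' {d : Δ | t' ≤ ‖u n₀ d‖} := rfl
      rw [heq]
      exact hKfin.preimage inv_injective.injOn
    set Fδ : Finset Δ := hFδfin.toFinset with hFδdef
    set A : Γ → Δ → Set Ω := fun γ δ => {x | α γ⁻¹ x = δ} with hAdef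
    have hAmeas : ∀ γ δ, MeasurableSet (A γ δ) :=
      fun γ δ => hαmeas γ⁻¹ (measurableSet_singleton δ)
    set hh : Γ → Δ → ℝ := fun γ δ =>
      ∫ x, Set.indicator (A γ δ) (fun x => g (T γ⁻¹ x) * g x) x ∂μ with hhhdef
    have hind_int : ∀ γ δ, Integrable
        (fun x => Set.indicator (A γ δ) (fun x => g (T γ⁻¹ x) * g x) x) μ :=
      fun γ δ => (hgg1_int γ⁻¹).indicator (hAmeas γ δ)
    have hh_nonneg : ∀ γ δ, 0 ≤ hh γ δ := by
      intro γ δ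
      apply integral_nonneg
      intro x
      exact Set.indicator_nonneg (fun y _ => mul_nonneg (hg_nonneg _) (hg_nonneg _)) x
    -- the basic bound
    have hbound : ∀ γ : Γ, ‖w0 n₀ γ‖ ≤ t' + ∑ δ ∈ Fδ, hh γ δ := by
      intro γ
      have habs_int' : Integrable
          (fun x => ‖(((g (T γ⁻¹ x) * g x : ℝ)) : ℂ) * u n₀ ((α γ⁻¹ x)⁻¹)‖) μ := by
        have := (hCInt (fun x => g (T γ⁻¹ x) * g x) (fun x => u n₀ ((α γ⁻¹ x)⁻¹))
          ((hg_meas.comp (hTmeas γ⁻¹)).mul hg_meas)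
          (((huinv_meas n₀).comp (hαmeas γ⁻¹)))
          (hgg1_int γ⁻¹) (fun x => mul_nonneg (hg_nonneg _) (hg_nonneg _))
          (fun x => hu_bd n₀ _)).norm
        exact this
      have h1 : ‖w0 n₀ γ‖ ≤
          ∫ x, ‖(((g (T γ⁻¹ x) * g x : ℝ)) : ℂ) * u n₀ ((α γ⁻¹ x)⁻¹)‖ ∂μ := by
        refine le_trans (norm_integral_le_integral_norm _) ?_
        exact le_refl _
      have hptw : ∀ x, ‖(((g (T γ⁻¹ x) * g x : ℝ)) : ℂ) * u n₀ ((α γ⁻¹ x)⁻¹)‖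
          ≤ t' * (g (T γ⁻¹ x) * g x) +
            ∑ δ ∈ Fδ, Set.indicator (A γ δ) (fun x => g (T γ⁻¹ x) * g x) x := by
        intro x
        have hgg0 : 0 ≤ g (T γ⁻¹ x) * g x := mul_nonneg (hg_nonneg _) (hg_nonneg _)
        rw [norm_mul, Complex.norm_real, Real.norm_eq_abs, abs_of_nonneg hgg0]
        have hsum0 : 0 ≤ ∑ δ ∈ Fδ, Set.indicator (A γ δ) (fun x => g (T γ⁻¹ x) * g x) x :=
          Finset.sum_nonneg fun δ _ =>
            Set.indicator_nonneg (fun y _ => mul_nonneg (hg_nonneg _) (hg_nonneg _)) x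
        by_cases hmem : α γ⁻¹ x ∈ Fδ
        · have hxA : x ∈ A γ (α γ⁻¹ x) := rfl
          have hterm : Set.indicator (A γ (α γ⁻¹ x)) (fun x => g (T γ⁻¹ x) * g x) x
              = g (T γ⁻¹ x) * g x := Set.indicator_of_mem hxA _
          have hterm_le : g (T γ⁻¹ x) * g x ≤
              ∑ δ ∈ Fδ, Set.indicator (A γ δ) (fun x => g (T γ⁻¹ x) * g x) x := by
            rw [← hterm]
            exact Finset.single_le_sum (f := fun δ =>
              Set.indicator (A γ δ) (fun x => g (T γ⁻¹ x) * g x) x)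
              (fun δ _ => Set.indicator_nonneg
                (fun y _ => mul_nonneg (hg_nonneg _) (hg_nonneg _)) x) hmem
          have hle1 : g (T γ⁻¹ x) * g x * ‖u n₀ ((α γ⁻¹ x)⁻¹)‖
              ≤ g (T γ⁻¹ x) * g x := by
            calc _ ≤ g (T γ⁻¹ x) * g x * 1 := mul_le_mul_of_nonneg_left (hu_bd n₀ _) hgg0
              _ = _ := mul_one _
          have ht'gg : 0 ≤ t' * (g (T γ⁻¹ x) * g x) := mul_nonneg ht'pos.le hgg0
          linarith
        · have hlt : ‖u n₀ ((α γ⁻¹ x)⁻¹)‖ < t' := by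
            by_contra hge
            apply hmem
            rw [hFδdef, Set.Finite.mem_toFinset]
            exact le_of_not_gt hge
          have := mul_le_mul_of_nonneg_left hlt.le hgg0
          linarith [mul_comm (g (T γ⁻¹ x) * g x) t']
      have hRHS_int : Integrable (fun x => t' * (g (T γ⁻¹ x) * g x) +
          ∑ δ ∈ Fδ, Set.indicator (A γ δ) (fun x => g (T γ⁻¹ x) * g x) x) μ :=
        ((hgg1_int γ⁻¹).const_mul t').add
          (integrable_finset_sum _ (fun δ _ => hind_int γ δ))
      have h2 := integral_mono habs_int' hRHS_int hptw
      have h3 : ∫ x, (t' * (g (T γ⁻¹ x) * g x) +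
          ∑ δ ∈ Fδ, Set.indicator (A γ δ) (fun x => g (T γ⁻¹ x) * g x) x) ∂μ
          = t' * I γ + ∑ δ ∈ Fδ, hh γ δ := by
        rw [integral_add ((hgg1_int γ⁻¹).const_mul t')
            (integrable_finset_sum _ (fun δ _ => hind_int γ δ)),
          integral_const_mul, integral_finset_sum _ (fun δ _ => hind_int γ δ)]
      rw [h3] at h2
      have h4 : t' * I γ ≤ t' := by
        calc t' * I γ ≤ t' * 1 := by
              apply mul_le_mul_of_nonneg_left _ ht'pos.le
              linarith [hI_le γ]
          _ = t' := mul_one _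
      linarith [le_trans h1 h2]
    -- counting estimate
    have hcount : ∀ δ : Δ, ∀ G : Finset Γ, ∑ γ ∈ G, hh γ δ ≤ (F.card : ℝ) := by
      intro δ G
      set B : Γ → Set Ω := fun γ => {x | α γ⁻¹ x = δ ∧ x ∈ S ∧ T γ⁻¹ x ∈ S} with hBdef
      set B' : Γ → Set Ω := fun γ => {y | α γ y = δ⁻¹ ∧ T γ y ∈ S ∧ y ∈ S} with hB'def
      have hBmeas : ∀ γ, MeasurableSet (B γ) := by
        intro γ
        have : B γ = A γ δ ∩ (S ∩ (T γ⁻¹) ⁻¹' S) := rfl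
        rw [this]
        exact (hAmeas γ δ).inter (hSmeas.inter ((hTmeas γ⁻¹) hSmeas))
      have hB'meas : ∀ γ, MeasurableSet (B' γ) := by
        intro γ
        have : B' γ = (α γ) ⁻¹' {δ⁻¹} ∩ ((T γ) ⁻¹' S ∩ S) := rfl
        rw [this]
        exact ((hαmeas γ) (measurableSet_singleton δ⁻¹)).inter
          (((hTmeas γ) hSmeas).inter hSmeas)
      have hBint : ∀ γ, Integrable (fun x => Set.indicator (B γ) ftil x) μ :=
        fun γ => hftil_int.indicator (hBmeas γ)
      have hB'int : ∀ γ, Integrable (fun x => Set.indicator (B' γ) ftil x) μ :=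
        fun γ => hftil_int.indicator (hB'meas γ)
      have hBTint : ∀ γ, Integrable
          (fun x => Set.indicator (B γ) (fun x => ftil (T γ⁻¹ x)) x) μ :=
        fun γ => (hftilT_int γ⁻¹).indicator (hBmeas γ)
      -- step 1 : pointwise bound of the indicator integrand
      have hhh_le : ∀ γ, hh γ δ ≤
          ((∫ x, Set.indicator (B γ) (fun x => ftil (T γ⁻¹ x)) x ∂μ) +
            ∫ x, Set.indicator (B γ) ftil x ∂μ) / 2 := by
        intro γ
        have hptw : ∀ x, Set.indicator (A γ δ) (fun x => g (T γ⁻¹ x) * g x) x ≤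
            (Set.indicator (B γ) (fun x => ftil (T γ⁻¹ x)) x +
              Set.indicator (B γ) ftil x) / 2 := by
          intro x
          have hBnn : 0 ≤ Set.indicator (B γ) (fun x => ftil (T γ⁻¹ x)) x :=
            Set.indicator_nonneg (fun y _ => hftil_nonneg _) x
          have hBnn2 : 0 ≤ Set.indicator (B γ) ftil x :=
            Set.indicator_nonneg (fun y _ => hftil_nonneg _) x
          by_cases hA : x ∈ A γ δ
          · rw [Set.indicator_of_mem hA]
            by_cases hS1 : x ∈ S
            · by_cases hS2 : T γ⁻¹ x ∈ S
              · have hB : x ∈ B γ := ⟨hA, hS1, hS2⟩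
                rw [Set.indicator_of_mem hB, Set.indicator_of_mem hB]
                have e1 := hg_sq (T γ⁻¹ x)
                have e2 := hg_sq x
                nlinarith [sq_nonneg (g (T γ⁻¹ x) - g x), hg_nonneg (T γ⁻¹ x), hg_nonneg x]
              · rw [hg_zero _ hS2, zero_mul]
                linarith
            · rw [hg_zero _ hS1, mul_zero]
              linarith
          · rw [Set.indicator_of_notMem hA]
            linarith
        have := integral_mono (hind_int γ δ) (((hBTint γ).add (hBint γ)).div_const 2) hptw
        calc hh γ δ ≤ ∫ x, (Set.indicator (B γ) (fun x => ftil (T γ⁻¹ x)) x +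
              Set.indicator (B γ) ftil x) / 2 ∂μ := this
          _ = _ := by rw [integral_div, integral_add (hBTint γ) (hBint γ)]
      -- step 2 : change of variables for the first piece
      have hCoV1 : ∀ γ, ∫ x, Set.indicator (B γ) (fun x => ftil (T γ⁻¹ x)) x ∂μ
          = ∫ y, Set.indicator (B' γ) ftil y ∂μ := by
        intro γ
        have hmeasH : Measurable (fun x => Set.indicator (B γ) (fun x => ftil (T γ⁻¹ x)) x) :=
          (hftil_meas.comp (hTmeas γ⁻¹)).indicator (hBmeas γ)
        rw [hCoVR γ _ hmeasH]
        refine integral_congr_ae ?_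
        filter_upwards [ae_restrict_mem hXmeas] with y hy
        by_cases h' : y ∈ B' γ
        · have hmem : T γ y ∈ B γ := by
            refine ⟨?_, h'.2.1, ?_⟩
            · rw [hαinv γ y hy, h'.1]
              exact inv_inv δ
            · rw [hTinv γ y hy]
              exact h'.2.2
          rw [Set.indicator_of_mem hmem, Set.indicator_of_mem h', hTinv γ y hy]
        · have hmem : T γ y ∉ B γ := by
            intro hc
            apply h'
            refine ⟨?_, hc.2.1, ?_⟩
            · have := hc.1
              rw [hαinv γ y hy] at this
              rw [← inv_inv (α γ y), this]
            · have := hc.2.2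
              rwa [hTinv γ y hy] at this
          rw [Set.indicator_of_notMem hmem, Set.indicator_of_notMem h']
      -- step 3 : pointwise counting
      have hct : ∀ (BB : Γ → Set Ω) (s : Ω → Ω),
          (∀ γ x, x ∈ BB γ → ∃ γ₂ ∈ F, γ₂⁻¹ • s x ∈ Y ∧ ∃ β : Γ, β⁻¹ • s x ∈ Y) →
          True := fun _ _ _ => trivial
      have hct1 : ∀ x, ∑ γ ∈ G, Set.indicator (B γ) (fun _ => (1 : ℝ)) x ≤ (F.card : ℝ) := by
        intro x
        set sx : Ω := r x δ⁻¹ with hsxdef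
        set β : Γ := (hYfund sx).exists.choose with hβdef
        have hβY : β⁻¹ • sx ∈ Y := (hYfund sx).exists.choose_spec
        have hsub : G.filter (fun γ => x ∈ B γ) ⊆ F.image (fun γ₂ => β * γ₂⁻¹) := by
          intro γ hγ
          have hxB : x ∈ B γ := (Finset.mem_filter.1 hγ).2
          obtain ⟨hαx, hxS, hTS⟩ := hxB
          obtain ⟨γ₂, hγ₂F, hγ₂Y⟩ := hSmem _ hTS
          have hTeq : T γ⁻¹ x = γ⁻¹ • sx := by
            show r (γ⁻¹ • x) (α γ⁻¹ x)⁻¹ = γ⁻¹ • sx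
            rw [hαx, hsxdef]
            exact (hcomm γ⁻¹ x δ⁻¹).symm
          rw [hTeq, ← mul_smul, ← mul_inv_rev] at hγ₂Y
          have huniq : γ * γ₂ = β := (hYfund sx).unique hγ₂Y hβY
          rw [Finset.mem_image]
          exact ⟨γ₂, hγ₂F, by rw [← huniq]; group⟩
        have hcard : (G.filter (fun γ => x ∈ B γ)).card ≤ F.card :=
          le_trans (Finset.card_le_card hsub) (Finset.card_image_le)
        have heq : ∑ γ ∈ G, Set.indicator (B γ) (fun _ => (1 : ℝ)) x
            = ((G.filter (fun γ => x ∈ B γ)).card : ℝ) := by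
          rw [Finset.card_filter]
          push_cast
          refine Finset.sum_congr rfl fun γ _ => ?_
          by_cases h : x ∈ B γ
          · rw [Set.indicator_of_mem h, if_pos h]
          · rw [Set.indicator_of_notMem h, if_neg h]
        rw [heq]
        exact_mod_cast hcard
      have hct2 : ∀ x, ∑ γ ∈ G, Set.indicator (B' γ) (fun _ => (1 : ℝ)) x ≤ (F.card : ℝ) := by
        intro x
        set sx : Ω := r x δ with hsxdef
        set β : Γ := (hYfund sx).exists.choose with hβdef
        have hβY : β⁻¹ • sx ∈ Y := (hYfund sx).exists.choose_spec
        have hsub : G.filter (fun γ => x ∈ B' γ) ⊆ F.image (fun γ₂ => γ₂ * β⁻¹) := by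
          intro γ hγ
          have hxB : x ∈ B' γ := (Finset.mem_filter.1 hγ).2
          obtain ⟨hαx, hTS, hxS⟩ := hxB
          obtain ⟨γ₂, hγ₂F, hγ₂Y⟩ := hSmem _ hTS
          have hTeq : T γ x = γ • sx := by
            show r (γ • x) (α γ x)⁻¹ = γ • sx
            rw [hαx, inv_inv, hsxdef]
            exact (hcomm γ x δ).symm
          rw [hTeq, ← mul_smul] at hγ₂Y
          have h5 : (γ⁻¹ * γ₂)⁻¹ • sx ∈ Y := by
            rw [mul_inv_rev, inv_inv]
            exact hγ₂Y
          have huniq : γ⁻¹ * γ₂ = β := (hYfund sx).unique h5 hβY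
          rw [Finset.mem_image]
          refine ⟨γ₂, hγ₂F, ?_⟩
          have : γ = γ₂ * (γ⁻¹ * γ₂)⁻¹ := by group
          rw [← huniq]
          rw [← this]
        have hcard : (G.filter (fun γ => x ∈ B' γ)).card ≤ F.card :=
          le_trans (Finset.card_le_card hsub) (Finset.card_image_le)
        have heq : ∑ γ ∈ G, Set.indicator (B' γ) (fun _ => (1 : ℝ)) x
            = ((G.filter (fun γ => x ∈ B' γ)).card : ℝ) := by
          rw [Finset.card_filter]
          push_cast
          refine Finset.sum_congr rfl fun γ _ => ?_
          by_cases h : x ∈ B' γ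
          · rw [Set.indicator_of_mem h, if_pos h]
          · rw [Set.indicator_of_notMem h, if_neg h]
        rw [heq]
        exact_mod_cast hcard
      -- step 4 : integrate the counting bounds
      have hsum2 : ∑ γ ∈ G, ∫ x, Set.indicator (B γ) ftil x ∂μ ≤ (F.card : ℝ) := by
        rw [← integral_finset_sum _ (fun γ _ => hBint γ)]
        calc ∫ x, ∑ γ ∈ G, Set.indicator (B γ) ftil x ∂μ
            ≤ ∫ x, (F.card : ℝ) * ftil x ∂μ := by
              refine integral_mono (integrable_finset_sum _ (fun γ _ => hBint γ))
                (hftil_int.const_mul _) ?_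
              intro x
              dsimp only
              have : ∑ γ ∈ G, Set.indicator (B γ) ftil x
                  = (∑ γ ∈ G, Set.indicator (B γ) (fun _ => (1 : ℝ)) x) * ftil x := by
                rw [Finset.sum_mul]
                refine Finset.sum_congr rfl fun γ _ => ?_
                by_cases h : x ∈ B γ
                · rw [Set.indicator_of_mem h, Set.indicator_of_mem h, one_mul]
                · rw [Set.indicator_of_notMem h, Set.indicator_of_notMem h, zero_mul]
              rw [this]
              exact mul_le_mul_of_nonneg_right (hct1 x) (hftil_nonneg x)
          _ = (F.card : ℝ) * c := by rw [integral_const_mul, ← hcdef]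
          _ ≤ (F.card : ℝ) := by
              calc (F.card : ℝ) * c ≤ (F.card : ℝ) * 1 :=
                    mul_le_mul_of_nonneg_left hcub (Nat.cast_nonneg _)
                _ = _ := mul_one _
      have hsum1 : ∑ γ ∈ G, ∫ x, Set.indicator (B' γ) ftil x ∂μ ≤ (F.card : ℝ) := by
        rw [← integral_finset_sum _ (fun γ _ => hB'int γ)]
        calc ∫ x, ∑ γ ∈ G, Set.indicator (B' γ) ftil x ∂μ
            ≤ ∫ x, (F.card : ℝ) * ftil x ∂μ := by
              refine integral_mono (integrable_finset_sum _ (fun γ _ => hB'int γ))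
                (hftil_int.const_mul _) ?_
              intro x
              dsimp only
              have : ∑ γ ∈ G, Set.indicator (B' γ) ftil x
                  = (∑ γ ∈ G, Set.indicator (B' γ) (fun _ => (1 : ℝ)) x) * ftil x := by
                rw [Finset.sum_mul]
                refine Finset.sum_congr rfl fun γ _ => ?_
                by_cases h : x ∈ B' γ
                · rw [Set.indicator_of_mem h, Set.indicator_of_mem h, one_mul]
                · rw [Set.indicator_of_notMem h, Set.indicator_of_notMem h, zero_mul]
              rw [this]
              exact mul_le_mul_of_nonneg_right (hct2 x) (hftil_nonneg x)
          _ = (F.card : ℝ) * c := by rw [integral_const_mul, ← hcdef]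
          _ ≤ (F.card : ℝ) := by
              calc (F.card : ℝ) * c ≤ (F.card : ℝ) * 1 :=
                    mul_le_mul_of_nonneg_left hcub (Nat.cast_nonneg _)
                _ = _ := mul_one _
      calc ∑ γ ∈ G, hh γ δ
          ≤ ∑ γ ∈ G, ((∫ x, Set.indicator (B γ) (fun x => ftil (T γ⁻¹ x)) x ∂μ) +
              ∫ x, Set.indicator (B γ) ftil x ∂μ) / 2 :=
            Finset.sum_le_sum fun γ _ => hhh_le γ
        _ = ((∑ γ ∈ G, ∫ x, Set.indicator (B' γ) ftil x ∂μ) +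
              ∑ γ ∈ G, ∫ x, Set.indicator (B γ) ftil x ∂μ) / 2 := by
            rw [← Finset.sum_add_distrib, ← Finset.sum_div]
            congr 1
            refine Finset.sum_congr rfl fun γ _ => ?_
            rw [hCoV1 γ]
        _ ≤ ((F.card : ℝ) + (F.card : ℝ)) / 2 := by
            have := add_le_add hsum1 hsum2
            linarith
        _ = (F.card : ℝ) := by ring
    -- conclude
    have hsubset : {γ : Γ | t ≤ ‖w γ‖} ⊆ {γ : Γ | t' ≤ ∑ δ ∈ Fδ, hh γ δ} := by
      intro γ hγ
      simp only [Set.mem_setOf_eq] at hγ ⊢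
      have habs : ‖w γ‖ = c⁻¹ * ‖w0 n₀ γ‖ := by
        rw [hwdef]
        simp only
        rw [norm_mul, norm_inv, Complex.norm_real, Real.norm_eq_abs, abs_of_pos hcpos]
      have h1 : t * c ≤ ‖w0 n₀ γ‖ := by
        rw [habs] at hγ
        have h := mul_le_mul_of_nonneg_left hγ hcpos.le
        rw [← mul_assoc, mul_inv_cancel₀ (ne_of_gt hcpos), one_mul] at h
        rw [mul_comm]
        exact h
      have h2 := hbound γ
      have : 2 * t' = t * c := by rw [ht'def]; ring
      linarith
    refine Set.Finite.subset ?_ hsubset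
    by_cases hFδne : Fδ.Nonempty
    · have hsubset2 : {γ : Γ | t' ≤ ∑ δ ∈ Fδ, hh γ δ} ⊆
          ⋃ δ ∈ (Fδ : Set Δ), {γ : Γ | t' / Fδ.card ≤ hh γ δ} := by
        intro γ hγ
        simp only [Set.mem_setOf_eq] at hγ
        by_contra hγn
        simp only [Set.mem_iUnion, Set.mem_setOf_eq, not_exists] at hγn
        have hlt : ∀ δ ∈ Fδ, hh γ δ < t' / Fδ.card := by
          intro δ hδ
          have := hγn δ hδ
          linarith [lt_of_not_ge this]
        have := Finset.sum_lt_sum_of_nonempty hFδne hlt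
        rw [Finset.sum_const, nsmul_eq_mul] at this
        have hcardpos : 0 < (Fδ.card : ℝ) := by
          exact_mod_cast Finset.card_pos.2 hFδne
        rw [mul_div_cancel₀ _ (ne_of_gt hcardpos)] at this
        linarith
      refine Set.Finite.subset ?_ hsubset2
      refine Set.Finite.biUnion (Fδ.finite_toSet) ?_
      intro δ _
      exact finite_of_finsetsum_bdd (fun γ => hh_nonneg γ δ)
        (div_pos ht'pos (by exact_mod_cast Finset.card_pos.2 hFδne)) (hcount δ)
    · rw [Finset.not_nonempty_iff_eq_empty] at hFδne
      have : {γ : Γ | t' ≤ ∑ δ ∈ Fδ, hh γ δ} = ∅ := by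
        ext γ
        simp only [Set.mem_setOf_eq, Set.mem_empty_iff_false, iff_false, not_le, hFδne,
          Finset.sum_empty]
        exact ht'pos
      rw [this]
      exact Set.finite_empty
  exact ⟨w, hwpd, hw1, hwC0, hwclose⟩


/-- Theorem 1.9(1): if `Γ` and `Δ` are (amenably) measure equivalent — via commuting
measure-preserving free actions on `(Ω, m)` with fundamental domains `X` (for `Δ`) and `Y`
(for `Γ`), the induced `Γ`-action on `X` preserving `μ = m|_X`, and with the pair `(Γ, X)`
amenable — and `Δ` has the Haagerup property, then `Γ` has the Haagerup property. -/
theorem haagerup_of_measure_equivalence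
    {Γ Δ Ω : Type*}
    [Group Γ] [Countable Γ] [Group Δ] [Countable Δ]
    [MeasurableSpace Δ] [MeasurableSingletonClass Δ]
    [MeasurableSpace Ω] [StandardBorelSpace Ω]
    (m : Measure Ω) [SigmaFinite m]
    -- the left action of Γ : measurable and measure preserving
    [MulAction Γ Ω]
    (hΓmp : ∀ γ : Γ, MeasurePreserving (fun s : Ω => γ • s) m m)
    -- the right action of Δ : measurable and measure preserving
    (r : Ω → Δ → Ω)
    (hr1 : ∀ s, r s 1 = s)
    (hrmul : ∀ s δ₁ δ₂, r s (δ₁ * δ₂) = r (r s δ₁) δ₂)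
    (hΔmp : ∀ δ : Δ, MeasurePreserving (fun s => r s δ) m m)
    -- the two actions commute and are free
    (hcomm : ∀ (γ : Γ) (s : Ω) (δ : Δ), γ • r s δ = r (γ • s) δ)
    (hΓfree : ∀ (γ : Γ) (s : Ω), γ • s = s → γ = 1)
    (hΔfree : ∀ (δ : Δ) (s : Ω), r s δ = s → δ = 1)
    -- `X` is a strict fundamental domain for the Δ-action
    (X : Set Ω) (hXmeas : MeasurableSet X)
    (hXfund : ∀ s : Ω, ∃! δ : Δ, r s δ ∈ X)
    -- `Y` is a strict fundamental domain for the Γ-action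
    (Y : Set Ω) (hYmeas : MeasurableSet Y)
    (hYfund : ∀ s : Ω, ∃! γ : Γ, γ⁻¹ • s ∈ Y)
    -- the cocycle `α` and the induced action `γ∗x = γ·x·α(γ,x)⁻¹` on `X`
    (α : Γ → Ω → Δ)
    (hαmeas : ∀ γ : Γ, Measurable (α γ))
    (hα : ∀ γ : Γ, ∀ x ∈ X, r (γ • x) (α γ x)⁻¹ ∈ X)
    -- the induced action preserves `μ = m|_X`
    (hind : ∀ γ : Γ, MeasurePreserving (fun x => r (γ • x) (α γ x)⁻¹)
      (m.restrict X) (m.restrict X))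
    -- the pair `(Γ, X)` is amenable
    (f : ℕ → Ω → ℝ)
    (hfmeas : ∀ n, Measurable (f n)) (hfnonneg : ∀ n x, 0 ≤ f n x)
    (hfint : ∀ n, ∫ x in X, f n x ∂m = 1)
    (hfinv : ∀ γ : Γ, Tendsto
      (fun n => ∫ x in X, |f n (r (γ⁻¹ • x) (α γ⁻¹ x)⁻¹) - f n x| ∂m) atTop (nhds 0))
    -- `Δ` has the Haagerup property
    (u : ℕ → Δ → ℂ)
    (hupd : ∀ n, IsPosDefFn (u n))
    (hu1 : ∀ n, u n 1 = 1)
    (huC0 : ∀ n, ∀ ε : ℝ, 0 < ε → {d : Δ | ε ≤ ‖u n d‖}.Finite)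
    (hulim : ∀ d : Δ, Tendsto (fun n => u n d) atTop (nhds 1)) :
    -- then `Γ` has the Haagerup property
    ∃ v : ℕ → Γ → ℂ, (∀ n, IsPosDefFn (v n)) ∧ (∀ n, v n 1 = 1) ∧
      (∀ n, ∀ ε : ℝ, 0 < ε → {γ : Γ | ε ≤ ‖v n γ‖}.Finite) ∧
      ∀ γ : Γ, Tendsto (fun n => v n γ) atTop (nhds 1) := by
  classical
  obtain ⟨gΓ, hgΓ⟩ := exists_surjective_nat Γ
  have H : ∀ n : ℕ, ∃ w : Γ → ℂ, IsPosDefFn w ∧ w 1 = 1 ∧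
      (∀ t : ℝ, 0 < t → {γ : Γ | t ≤ ‖w γ‖}.Finite) ∧
      ∀ γ ∈ (Finset.range (n + 1)).image gΓ, ‖w γ - 1‖ < 1 / (n + 1) := by
    intro n
    exact main_step m hΓmp r hr1 hrmul hΔmp hcomm X hXmeas hXfund Y hYmeas hYfund α hαmeas hα
      hind f hfmeas hfnonneg hfint hfinv u hupd hu1 huC0 hulim
      ((Finset.range (n + 1)).image gΓ) (1 / (n + 1)) (by positivity)
  choose v h1 h2 h3 h4 using H
  refine ⟨v, h1, h2, h3, ?_⟩
  intro γ
  rw [Metric.tendsto_atTop]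
  intro ε' hε'
  obtain ⟨i, hi⟩ := hgΓ γ
  obtain ⟨N', hN'⟩ := exists_nat_gt (1 / ε')
  refine ⟨max i N', fun n hn => ?_⟩
  have hin : i ≤ n := le_trans (le_max_left i N') hn
  have hmem : γ ∈ (Finset.range (n + 1)).image gΓ :=
    Finset.mem_image.2 ⟨i, Finset.mem_range.2 (by omega), hi⟩
  have hclose := h4 n γ hmem
  rw [Complex.dist_eq]
  refine lt_trans hclose ?_
  have hNn : (N' : ℝ) ≤ (n : ℝ) := by
    exact_mod_cast le_trans (le_max_right i N') hn
  have hεn : 1 / ε' < (n : ℝ) + 1 := by linarith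
  have hkey : 1 < ((n : ℝ) + 1) * ε' := (div_lt_iff₀ hε').1 hεn
  rw [div_lt_iff₀ (show (0 : ℝ) < (n : ℝ) + 1 by positivity), mul_comm]
  exact hkey
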